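/- Adequacy of the tree rewriting calculus: for any spi-logic L = K⁺ ∪ A with A ⊆ {(4),(m),(J)}, if T ↪*_{TL} T' for modal trees T, T', then F(T) ⊢_L F(T'), where F is the embedding of modal trees into strictly positive formulas. -/

import Mathlib

inductive MTree : Type where
  | node : List ℕ → List (ℕ × MTree) → MTree

namespace MTree

mutual
def numNodes : MTree → ℕ
  | .node _ Γ => 1 + numNodesL Γ
def numNodesL : List (ℕ × MTree) → ℕ
  | [] => 0
  | (_, t) :: Γ => numNodes t + numNodesL Γ
end

mutual
def height : MTree → ℕ
  | .node _ [] => 0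
  | .node _ (p :: Γ) => heightL (p :: Γ) + 1
def heightL : List (ℕ × MTree) → ℕ
  | [] => 0
  | (_, t) :: Γ => max (height t) (heightL Γ)
end

mutual
def width : MTree → ℕ
  | .node _ [] => 1
  | .node _ (p :: Γ) => max (p :: Γ).length (widthL (p :: Γ))
def widthL : List (ℕ × MTree) → ℕ
  | [] => 0
  | (_, t) :: Γ => max (width t) (widthL Γ)
end

def sum : MTree → MTree → MTree
  | .node Δ Γ, .node Δ' Γ' => .node (Δ ++ Δ') (Γ ++ Γ')

inductive IsPos : List ℕ → MTree → Prop where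
  | nil : ∀ t, IsPos [] t
  | cons : ∀ {Δ : List ℕ} {Γ : List (ℕ × MTree)} {i : ℕ} {k : List ℕ}
      (h : i < Γ.length), IsPos k (Γ.get ⟨i, h⟩).2 → IsPos (i :: k) (.node Δ Γ)

def subtree : List ℕ → MTree → MTree
  | [], t => t
  | i :: k, .node Δ Γ =>
    match Γ[i]? with
    | some p => subtree k p.2
    | none => .node Δ Γ

def replace : List ℕ → MTree → MTree → MTree
  | [], _, s => s
  | i :: k, .node Δ Γ, s =>
      .node Δ (Γ.modify i (fun p => (p.1, replace k p.2 s)))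

inductive RhoPlus : MTree → MTree → Prop where
  | mk : ∀ (Δ : List ℕ) (Γ : List (ℕ × MTree)) (i : ℕ) (h : i < Δ.length),
      RhoPlus (.node Δ Γ) (.node (Δ.get ⟨i, h⟩ :: Δ) Γ)

inductive RhoMinus : MTree → MTree → Prop where
  | mk : ∀ (Δ : List ℕ) (Γ : List (ℕ × MTree)) (i : ℕ), i < Δ.length →
      RhoMinus (.node Δ Γ) (.node (Δ.eraseIdx i) Γ)

inductive Sigma' : MTree → MTree → Prop where
  | mk : ∀ (Δ : List ℕ) (Γ : List (ℕ × MTree)) (i j : ℕ)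
      (hi : i < Γ.length) (hj : j < Γ.length), i ≠ j →
      Sigma' (.node Δ Γ) (.node Δ ((Γ.set i (Γ.get ⟨j, hj⟩)).set j (Γ.get ⟨i, hi⟩)))

inductive PiPlus : MTree → MTree → Prop where
  | mk : ∀ (Δ : List ℕ) (Γ : List (ℕ × MTree)) (i : ℕ) (h : i < Γ.length),
      PiPlus (.node Δ Γ) (.node Δ (Γ.get ⟨i, h⟩ :: Γ))

inductive PiMinus : MTree → MTree → Prop where
  | mk : ∀ (Δ : List ℕ) (Γ : List (ℕ × MTree)) (i : ℕ), i < Γ.length →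
      PiMinus (.node Δ Γ) (.node Δ (Γ.eraseIdx i))

inductive FourR : MTree → MTree → Prop where
  | mk : ∀ (Δ : List ℕ) (Γ : List (ℕ × MTree)) (i : ℕ) (h : i < Γ.length)
      (β : ℕ) (s : MTree),
      Γ.get ⟨i, h⟩ = (β, .node [] [(β, s)]) →
      FourR (.node Δ Γ) (.node Δ (Γ.set i (β, s)))

inductive MonoR : MTree → MTree → Prop where
  | mk : ∀ (Δ : List ℕ) (Γ : List (ℕ × MTree)) (i : ℕ) (h : i < Γ.length)
      (α β : ℕ) (s : MTree),
      Γ.get ⟨i, h⟩ = (α, s) → β < α →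
      MonoR (.node Δ Γ) (.node Δ (Γ.set i (β, s)))

inductive JayR : MTree → MTree → Prop where
  | mk : ∀ (Δ : List ℕ) (Γ : List (ℕ × MTree)) (i j : ℕ)
      (hi : i < Γ.length) (hj : j < Γ.length)
      (α β : ℕ) (Δ' : List ℕ) (Γ' : List (ℕ × MTree)) (s : MTree),
      i ≠ j → Γ.get ⟨i, hi⟩ = (α, .node Δ' Γ') → Γ.get ⟨j, hj⟩ = (β, s) → β < α →
      JayR (.node Δ Γ)
        (.node Δ ((Γ.set i (α, .node Δ' (Γ' ++ [(β, s)]))).eraseIdx j))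

inductive Ax : Type where
  | four | mono | jay
deriving DecidableEq

def axRule : Ax → MTree → MTree → Prop
  | .four => FourR
  | .mono => MonoR
  | .jay  => JayR

def rootStep (A : Set Ax) (t t' : MTree) : Prop :=
  RhoPlus t t' ∨ RhoMinus t t' ∨ Sigma' t t' ∨ PiPlus t t' ∨ PiMinus t t' ∨
    ∃ a ∈ A, axRule a t t'

def deepStep (R : MTree → MTree → Prop) (t t' : MTree) : Prop :=
  ∃ k s', IsPos k t ∧ R (subtree k t) s' ∧ t' = replace k t s'

def Rw (A : Set Ax) : MTree → MTree → Prop :=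
  Relation.ReflTransGen (deepStep (rootStep A))

end MTree

inductive SPF : Type where
  | top
  | var : ℕ → SPF
  | dia : ℕ → SPF → SPF
  | and : SPF → SPF → SPF

namespace SPF

def md : SPF → ℕ
  | .top => 0
  | .var _ => 0
  | .dia _ φ => φ.md + 1
  | .and φ ψ => max φ.md ψ.md

def bigAnd : List SPF → SPF
  | [] => .top
  | φ :: l => .and φ (bigAnd l)

def toTree : SPF → MTree
  | .top => .node [] []
  | .var p => .node [p] []
  | .dia α φ => .node [] [(α, toTree φ)]
  | .and φ ψ => (toTree φ).sum (toTree ψ)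

end SPF

namespace MTree
mutual
def toForm : MTree → SPF
  | .node Δ Γ => .and (SPF.bigAnd (Δ.map .var)) (toFormL Γ)
def toFormL : List (ℕ × MTree) → SPF
  | [] => .top
  | (α, t) :: Γ => .and (.dia α (toForm t)) (toFormL Γ)
end
end MTree

inductive Deriv (A : Set MTree.Ax) : SPF → SPF → Prop where
  | refl (φ) : Deriv A φ φ
  | top (φ) : Deriv A φ .top
  | trans {φ ψ χ} : Deriv A φ ψ → Deriv A ψ χ → Deriv A φ χ
  | andE1 (φ ψ) : Deriv A (.and φ ψ) φ
  | andE2 (φ ψ) : Deriv A (.and φ ψ) ψ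
  | andI {φ ψ χ} : Deriv A φ ψ → Deriv A φ χ → Deriv A φ (.and ψ χ)
  | dist {φ ψ} (α : ℕ) : Deriv A φ ψ → Deriv A (.dia α φ) (.dia α ψ)
  | four (α : ℕ) (φ) : MTree.Ax.four ∈ A → Deriv A (.dia α (.dia α φ)) (.dia α φ)
  | mono (α β : ℕ) (φ) : MTree.Ax.mono ∈ A → β < α → Deriv A (.dia α φ) (.dia β φ)
  | jay (α β : ℕ) (φ ψ) : MTree.Ax.jay ∈ A → β < α →
      Deriv A (.and (.dia α φ) (.dia β ψ)) (.dia α (.and φ (.dia β ψ)))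

inductive RuleKind : Type where
  | rhoP | rhoM | sigma | piP | piM | four | mono | jay
deriving DecidableEq

def RuleKind.rel : RuleKind → MTree → MTree → Prop
  | .rhoP => MTree.RhoPlus
  | .rhoM => MTree.RhoMinus
  | .sigma => MTree.Sigma'
  | .piP => MTree.PiPlus
  | .piM => MTree.PiMinus
  | .four => MTree.FourR
  | .mono => MTree.MonoR
  | .jay => MTree.JayR

def listRw : List RuleKind → MTree → MTree → Prop
  | [], t, s => t = s
  | μ :: Ω, t, s => ∃ u, MTree.deepStep μ.rel t u ∧ listRw Ω u s



section Aux
open MTree SPF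

lemma toFormL_cons (p : ℕ × MTree) (Γ : List (ℕ × MTree)) :
    MTree.toFormL (p :: Γ) = .and (.dia p.1 (MTree.toForm p.2)) (MTree.toFormL Γ) := by
  cases p; rfl

lemma toForm_node (Δ : List ℕ) (Γ : List (ℕ × MTree)) :
    MTree.toForm (.node Δ Γ) = .and (SPF.bigAnd (Δ.map .var)) (MTree.toFormL Γ) := rfl

variable {A : Set MTree.Ax}

lemma deriv_bigAnd_of {φ : SPF} {l : List SPF} (h : ∀ ψ ∈ l, Deriv A φ ψ) :
    Deriv A φ (SPF.bigAnd l) := by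
  induction l with
  | nil => exact .top _
  | cons a l ih =>
    exact .andI (h a (by simp)) (ih fun ψ hψ => h ψ (by simp [hψ]))

lemma deriv_bigAnd_mem {l : List SPF} {ψ} (h : ψ ∈ l) : Deriv A (SPF.bigAnd l) ψ := by
  induction l with
  | nil => cases h
  | cons a l ih =>
    rcases List.mem_cons.1 h with h | h
    · subst h; exact .andE1 _ _
    · exact .trans (.andE2 _ _) (ih h)

lemma deriv_toFormL_proj {Γ : List (ℕ × MTree)} {p} (h : p ∈ Γ) :
    Deriv A (MTree.toFormL Γ) (.dia p.1 (MTree.toForm p.2)) := by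
  induction Γ with
  | nil => cases h
  | cons a Γ ih =>
    rw [toFormL_cons]
    rcases List.mem_cons.1 h with h | h
    · subst h; exact .andE1 _ _
    · exact .trans (.andE2 _ _) (ih h)

lemma deriv_toFormL_build {φ : SPF} {Γ : List (ℕ × MTree)}
    (h : ∀ p ∈ Γ, Deriv A φ (.dia p.1 (MTree.toForm p.2))) :
    Deriv A φ (MTree.toFormL Γ) := by
  induction Γ with
  | nil => exact .top _
  | cons a Γ ih =>
    rw [toFormL_cons]
    exact .andI (h a (by simp)) (ih fun p hp => h p (by simp [hp]))

lemma deriv_node_proj {Δ : List ℕ} {Γ : List (ℕ × MTree)} {p} (h : p ∈ Γ) :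
    Deriv A (MTree.toForm (.node Δ Γ)) (.dia p.1 (MTree.toForm p.2)) :=
  .trans (.andE2 _ _) (deriv_toFormL_proj h)

lemma deriv_node_node {Δ Δ' : List ℕ} {Γ Γ' : List (ℕ × MTree)}
    (hΔ : ∀ q ∈ Δ', q ∈ Δ)
    (hΓ : ∀ p ∈ Γ', Deriv A (MTree.toForm (.node Δ Γ)) (.dia p.1 (MTree.toForm p.2))) :
    Deriv A (MTree.toForm (.node Δ Γ)) (MTree.toForm (.node Δ' Γ')) := by
  refine .andI (deriv_bigAnd_of ?_) (deriv_toFormL_build hΓ)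
  intro ψ hψ
  rcases List.mem_map.1 hψ with ⟨q, hq, rfl⟩
  exact .trans (.andE1 _ _) (deriv_bigAnd_mem (List.mem_map_of_mem (hΔ q hq)))

lemma deriv_root {t t'} (h : MTree.rootStep A t t') :
    Deriv A (MTree.toForm t) (MTree.toForm t') := by
  rcases h with h | h | h | h | h | ⟨a, ha, h⟩
  · rcases h with ⟨Δ, Γ, i, hi⟩
    refine deriv_node_node ?_ (fun p hp => deriv_node_proj hp)
    intro q hq
    rcases List.mem_cons.1 hq with rfl | hq
    · exact List.get_mem _ _
    · exact hq
  · rcases h with ⟨Δ, Γ, i, hi⟩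
    exact deriv_node_node (fun q hq => List.Sublist.subset (List.eraseIdx_sublist _ _) hq)
      (fun p hp => deriv_node_proj hp)
  · rcases h with ⟨Δ, Γ, i, j, hi, hj, hij⟩
    refine deriv_node_node (fun q hq => hq) ?_
    intro p hp
    rcases List.mem_or_eq_of_mem_set hp with hp | rfl
    · rcases List.mem_or_eq_of_mem_set hp with hp | rfl
      · exact deriv_node_proj hp
      · exact deriv_node_proj (List.get_mem _ _)
    · exact deriv_node_proj (List.get_mem _ _)
  · rcases h with ⟨Δ, Γ, i, hi⟩
    refine deriv_node_node (fun q hq => hq) ?_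
    intro p hp
    rcases List.mem_cons.1 hp with rfl | hp
    · exact deriv_node_proj (List.get_mem _ _)
    · exact deriv_node_proj hp
  · rcases h with ⟨Δ, Γ, i, hi⟩
    exact deriv_node_node (fun q hq => hq)
      (fun p hp => deriv_node_proj (List.Sublist.subset (List.eraseIdx_sublist _ _) hp))
  · cases a with
    | four =>
      rcases h with ⟨Δ, Γ, i, hi, β, s, hget⟩
      refine deriv_node_node (fun q hq => hq) ?_
      intro p hp
      rcases List.mem_or_eq_of_mem_set hp with hp | rfl
      · exact deriv_node_proj hp
      · have h1 : Deriv A (MTree.toForm (.node Δ Γ))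
            (.dia β (MTree.toForm (MTree.node [] [(β, s)]))) := by
          have := deriv_node_proj (A := A) (Δ := Δ) (List.get_mem Γ ⟨i, hi⟩)
          rwa [hget] at this
        have h2 : Deriv A (MTree.toForm (MTree.node [] [(β, s)]))
            (.dia β (MTree.toForm s)) := deriv_node_proj (p := (β, s)) (by simp)
        exact .trans (.trans h1 (.dist β h2)) (.four β _ ha)
    | mono =>
      rcases h with ⟨Δ, Γ, i, hi, α, β, s, hget, hβ⟩
      refine deriv_node_node (fun q hq => hq) ?_
      intro p hp
      rcases List.mem_or_eq_of_mem_set hp with hp | rfl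
      · exact deriv_node_proj hp
      · have h1 : Deriv A (MTree.toForm (.node Δ Γ)) (.dia α (MTree.toForm s)) := by
          have := deriv_node_proj (A := A) (Δ := Δ) (List.get_mem Γ ⟨i, hi⟩)
          rwa [hget] at this
        exact .trans h1 (.mono α β _ ha hβ)
    | jay =>
      rcases h with ⟨Δ, Γ, i, j, hi, hj, α, β, Δ', Γ', s, hij, hgi, hgj, hβ⟩
      refine deriv_node_node (fun q hq => hq) ?_
      intro p hp
      rcases List.mem_of_mem_eraseIdx hp with hp
      rcases List.mem_or_eq_of_mem_set hp with hp | rfl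
      · exact deriv_node_proj hp
      · have h1 : Deriv A (MTree.toForm (.node Δ Γ))
            (.dia α (MTree.toForm (MTree.node Δ' Γ'))) := by
          have := deriv_node_proj (A := A) (Δ := Δ) (List.get_mem Γ ⟨i, hi⟩)
          rwa [hgi] at this
        have h2 : Deriv A (MTree.toForm (.node Δ Γ)) (.dia β (MTree.toForm s)) := by
          have := deriv_node_proj (A := A) (Δ := Δ) (List.get_mem Γ ⟨j, hj⟩)
          rwa [hgj] at this
        have h3 : Deriv A (MTree.toForm (.node Δ Γ))
            (.dia α (.and (MTree.toForm (MTree.node Δ' Γ'))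
              (.dia β (MTree.toForm s)))) :=
          .trans (.andI h1 h2) (.jay α β _ _ ha hβ)
        refine .trans h3 (.dist α ?_)
        refine .andI (.trans (.andE1 _ _) (.andE1 _ _)) (deriv_toFormL_build ?_)
        intro p hp
        rcases List.mem_append.1 hp with hp | hp
        · exact .trans (.andE1 _ _) (.trans (.andE2 _ _) (deriv_toFormL_proj hp))
        · simp at hp; subst hp; exact .andE2 _ _

lemma deriv_deep {R : MTree → MTree → Prop}
    (hR : ∀ t t', R t t' → Deriv A (MTree.toForm t) (MTree.toForm t')) :
    ∀ (k : List ℕ) (t : MTree) (s' : MTree), MTree.IsPos k t →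
      R (MTree.subtree k t) s' →
      Deriv A (MTree.toForm t) (MTree.toForm (MTree.replace k t s')) := by
  intro k
  induction k with
  | nil => intro t s' _ hr; exact hR _ _ hr
  | cons i k ih =>
    intro t s' hpos hr
    cases hpos with
    | cons hlt hpos' =>
      rename_i Δ Γ
      have hget : Γ[i]? = some (Γ.get ⟨i, hlt⟩) := by
        simp [List.getElem?_eq_getElem hlt]
      have hsub : MTree.subtree (i :: k) (.node Δ Γ)
          = MTree.subtree k (Γ.get ⟨i, hlt⟩).2 := by
        simp [MTree.subtree, hget]
      rw [hsub] at hr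
      have hd := ih _ _ hpos' hr
      show Deriv A (MTree.toForm (.node Δ Γ))
        (MTree.toForm (.node Δ (Γ.modify i (fun p => (p.1, MTree.replace k p.2 s')))))
      refine deriv_node_node (fun q hq => hq) ?_
      intro p hp
      rcases (List.mem_iff_getElem).1 hp with ⟨m, hm, rfl⟩
      have hm' : m < Γ.length := by simpa using hm
      by_cases hmi : m = i
      · subst hmi
        rw [List.getElem_modify_eq]
        have h0 : Deriv A (MTree.toForm (.node Δ Γ)) (.dia Γ[m].1 (MTree.toForm Γ[m].2)) :=
          deriv_node_proj (p := Γ[m]) (List.getElem_mem hm')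
        refine .trans h0 (.dist _ ?_)
        simpa using hd
      · rw [List.getElem_modify_ne _ Γ (Ne.symm hmi)]
        exact deriv_node_proj (List.getElem_mem hm')

end Aux

theorem stmt16 (A : Set MTree.Ax) (t t' : MTree) (h : MTree.Rw A t t') :
    Deriv A (MTree.toForm t) (MTree.toForm t') := by
  induction h with
  | refl => exact .refl _
  | tail _ hstep ih =>
    rcases hstep with ⟨k, s', hpos, hr, rfl⟩
    exact .trans ih (deriv_deep (fun a b => deriv_root) k _ s' hpos hr)
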